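/- Let f(x,y) = (1/4 + x + y, x/(−1/2 + y)) and define V(x,y) = (256x³y² + 384x²y³ + 128xy⁴ + 128x³y + 192x²y² + 32xy³ − 16y⁴ − 16x² − 8xy + 8y² − 8x − 1)/(−4y² + 4x + 1)². Then V(f(x,y)) = V(x,y) wherever defined, i.e., V is a first integral of f. -/
import Mathlib
set_option maxHeartbeats 2000000


theorem stmt_12 (x y : ℂ) (h1 : -(1 / 2 : ℂ) + y ≠ 0)
    (h2 : -4 * y ^ 2 + 4 * x + 1 ≠ 0)
    (h3 : -4 * (x / (-(1 / 2 : ℂ) + y)) ^ 2 + 4 * (1 / 4 + x + y) + 1 ≠ 0) :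
    let V : ℂ → ℂ → ℂ := fun u v =>
      (256 * u ^ 3 * v ^ 2 + 384 * u ^ 2 * v ^ 3 + 128 * u * v ^ 4
        + 128 * u ^ 3 * v + 192 * u ^ 2 * v ^ 2 + 32 * u * v ^ 3
        - 16 * v ^ 4 - 16 * u ^ 2 - 8 * u * v + 8 * v ^ 2 - 8 * u - 1)
        / (-4 * v ^ 2 + 4 * u + 1) ^ 2
    V (1 / 4 + x + y) (x / (-(1 / 2 : ℂ) + y)) = V x y := by
  intro V
  obtain ⟨w, rfl⟩ : ∃ w, x = w * (-(1 / 2 : ℂ) + y) :=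
    ⟨x / (-(1 / 2 : ℂ) + y), (div_mul_cancel₀ x h1).symm⟩
  rw [mul_div_cancel_right₀ _ h1] at h3 ⊢
  simp only [V]
  rw [div_eq_div_iff (pow_ne_zero 2 h3) (pow_ne_zero 2 h2)]
  ring
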